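/- Let (p*, b*) be optimal for the price-taker storage LP with KKT multipliers. If interval z is idle (p*_z = b*_z = 0), interval u is a discharge-withholding interval (0 < p*_u < P̄), and interval v is a charge-withholding interval (0 < b*_v < P̄), then λ_z/η² ≥ λ_u ≥ λ_z and λ_z ≥ λ_v ≥ λ_z·η². -/

import Mathlib

/-- KKT conditions for the price-taker storage LP: stationarity, primal box
feasibility, dual feasibility, and complementary slackness. -/
def StorageKKT (T : ℕ) (η Pm : ℝ) (lam p b : Fin T → ℝ) (θ : ℝ)
    (δm δp βm βp : Fin T → ℝ) : Prop :=
  (∀ t, lam t + θ / η + δm t - δp t = 0) ∧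
  (∀ t, -lam t - θ * η + βm t - βp t = 0) ∧
  (∑ t, (p t / η - b t * η)) = 0 ∧
  (∀ t, 0 ≤ p t ∧ p t ≤ Pm) ∧ (∀ t, 0 ≤ b t ∧ b t ≤ Pm) ∧
  (∀ t, 0 ≤ δm t ∧ 0 ≤ δp t ∧ 0 ≤ βm t ∧ 0 ≤ βp t) ∧
  (∀ t, δm t * p t = 0 ∧ δp t * (p t - Pm) = 0) ∧
  (∀ t, βm t * b t = 0 ∧ βp t * (b t - Pm) = 0)

/-- Proposition 5, part 3: at a KKT point, an idle interval `z`
has its price sandwiched relative to the prices of a discharge-withholding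
interval `u` and a charge-withholding interval `v`:
`λ z / η² ≥ λ u ≥ λ z` and `λ z ≥ λ v ≥ λ z · η²`. -/
theorem taker_price_decision_idle
    (T : ℕ) (η Pm : ℝ) (lam p b : Fin T → ℝ) (θ : ℝ)
    (δm δp βm βp : Fin T → ℝ)
    (hη : 0 < η) (hη1 : η < 1) (hPm : 0 < Pm) (hlam : ∀ t, 0 ≤ lam t)
    (hkkt : StorageKKT T η Pm lam p b θ δm δp βm βp)
    (z u v : Fin T) (hz : p z = 0 ∧ b z = 0)
    (hu : 0 < p u ∧ p u < Pm) (hv : 0 < b v ∧ b v < Pm) :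
    (lam z / η ^ 2 ≥ lam u ∧ lam u ≥ lam z) ∧
      (lam z ≥ lam v ∧ lam v ≥ lam z * η ^ 2) := by
  obtain ⟨hs1, hs2, -, -, -, hdual, hcsp, hcsb⟩ := hkkt
  have hηne : η ≠ 0 := ne_of_gt hη
  -- at u: δm u = 0 and δp u = 0
  have hδmu : δm u = 0 := by
    rcases mul_eq_zero.1 (hcsp u).1 with h | h
    · exact h
    · exact absurd h (ne_of_gt hu.1)
  have hδpu : δp u = 0 := by
    rcases mul_eq_zero.1 (hcsp u).2 with h | h
    · exact h
    · exact absurd h (ne_of_lt (sub_neg.2 hu.2))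
  -- at v: βm v = 0 and βp v = 0
  have hβmv : βm v = 0 := by
    rcases mul_eq_zero.1 (hcsb v).1 with h | h
    · exact h
    · exact absurd h (ne_of_gt hv.1)
  have hβpv : βp v = 0 := by
    rcases mul_eq_zero.1 (hcsb v).2 with h | h
    · exact h
    · exact absurd h (ne_of_lt (sub_neg.2 hv.2))
  -- at z: δp z = 0, βp z = 0
  have hδpz : δp z = 0 := by
    rcases mul_eq_zero.1 (hcsp z).2 with h | h
    · exact h
    · rw [hz.1, zero_sub] at h; exact absurd h (ne_of_lt (neg_neg_iff_pos.2 hPm))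
  have hβpz : βp z = 0 := by
    rcases mul_eq_zero.1 (hcsb z).2 with h | h
    · exact h
    · rw [hz.2, zero_sub] at h; exact absurd h (ne_of_lt (neg_neg_iff_pos.2 hPm))
  have hu' := hs1 u
  have hv' := hs2 v
  have hz1 := hs1 z
  have hz2 := hs2 z
  rw [hδmu, hδpu] at hu'
  rw [hβmv, hβpv] at hv'
  rw [hδpz] at hz1
  rw [hβpz] at hz2
  -- λ u = -θ/η, λ v = -θη, λ z = λ u - δm z = λ v + βm z
  have hlu : lam u = -θ / η := by field_simp at hu' ⊢; linarith
  have hlv : lam v = -θ * η := by linarith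
  have hδmz := (hdual z).1
  have hβmz := (hdual z).2.2.1
  have h1 : lam u ≥ lam z := by
    rw [hlu]
    field_simp at hz1
    have : -θ / η = lam z + δm z := by field_simp; linarith
    linarith
  have h2 : lam z ≥ lam v := by rw [hlv]; linarith
  have huv : lam v = lam u * η ^ 2 := by
    rw [hlu, hlv]; field_simp
  constructor
  · refine ⟨?_, h1⟩
    rw [ge_iff_le, le_div_iff₀ (by positivity)]
    nlinarith
  · refine ⟨h2, ?_⟩
    have : lam u ≥ lam z := h1
    nlinarith [sq_nonneg η]
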